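/- Let d ∈ [0,n], γ ∈ (1,∞), α ≥ 0 with d ≥ n − α, and 0 < s < ∞. Let m be a Radon measure on ℝⁿ such that m(B(x,r)) ≤ C r^d for all x ∈ ℝⁿ and r > 0. Define the fractional maximal operator M^{<s}[f,α](x) = sup_{r ∈ (0,s)} r^α · (1/L_n(B(x,r))) ∫_{B(x,r)} |f| dL_n. Then M^{<s}[·,α] is bounded from L_γ(ℝⁿ, L_n) into L_γ(ℝⁿ, m), with operator norm depending only on γ, n, d, α, C. -/

import Mathlib

open Metric Set MeasureTheory
open scoped ENNReal NNReal




lemma exist_finset_disjoint_balls_large_measure' {α : Type*} [MetricSpace α]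
    [SecondCountableTopology α] [MeasurableSpace α] [OpensMeasurableSpace α]
    (μ : Measure α) [IsFiniteMeasure μ] {N : ℕ} {τ : ℝ} (hτ : 1 < τ)
    (hN : IsEmpty (Besicovitch.SatelliteConfig α N τ)) (s : Set α) (r : α → ℝ)
    {R : ℝ} (hR : 0 < R)
    (rpos : ∀ x ∈ s, 0 < r x) (rle : ∀ x ∈ s, r x ≤ R) :
    ∃ t : Finset α, ↑t ⊆ s ∧ μ (s \ ⋃ x ∈ t, closedBall x (r x)) ≤ N / (N + 1) * μ s ∧
      (t : Set α).PairwiseDisjoint fun x => closedBall x (r x) := by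
  classical
  rcases le_or_gt (μ s) 0 with (hμs | hμs)
  · have : μ s = 0 := le_bot_iff.1 hμs
    refine ⟨∅, by simp only [Finset.coe_empty, empty_subset], ?_, ?_⟩
    · simp only [this, Finset.notMem_empty, diff_empty, iUnion_false, iUnion_empty,
        nonpos_iff_eq_zero, mul_zero]
    · simp only [Finset.coe_empty, pairwiseDisjoint_empty]
  cases isEmpty_or_nonempty α
  · simp only [eq_empty_of_isEmpty s, measure_empty] at hμs
    exact (lt_irrefl _ hμs).elim
  have Npos : N ≠ 0 := by
    rintro rfl
    inhabit α
    exact not_isEmpty_of_nonempty _ hN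
  obtain ⟨o, so, omeas, μo⟩ : ∃ o : Set α, s ⊆ o ∧ MeasurableSet o ∧ μ o = μ s :=
    exists_measurable_superset μ s
  let a : Besicovitch.BallPackage s α :=
    { c := fun x => x
      r := fun x => r x
      rpos := fun x => rpos x x.2
      r_bound := R
      r_le := fun x => rle x x.2 }
  rcases Besicovitch.exist_disjoint_covering_families hτ hN a with ⟨u, hu, hu'⟩
  have u_count : ∀ i, (u i).Countable := by
    intro i
    refine (hu i).countable_of_nonempty_interior fun j _ => ?_
    have : (ball (j : α) (r j)).Nonempty := nonempty_ball.2 (a.rpos _)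
    exact this.mono ball_subset_interior_closedBall
  let v : Fin N → Set α := fun i => ⋃ (x : s) (_ : x ∈ u i), closedBall x (r x)
  have A : s = ⋃ i : Fin N, s ∩ v i := by
    refine Subset.antisymm ?_ (iUnion_subset fun i => inter_subset_left)
    intro x hx
    obtain ⟨i, y, hxy, h'⟩ :
        ∃ (i : Fin N) (i_1 : ↥s), i_1 ∈ u i ∧ x ∈ ball (↑i_1) (r ↑i_1) := by
      have : x ∈ range a.c := by simpa only [a, Subtype.range_coe_subtype, ofPred_mem_eq]
      simpa only [mem_iUnion, bex_def] using hu' this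
    refine mem_iUnion.2 ⟨i, ⟨hx, ?_⟩⟩
    simp only [v, exists_prop, mem_iUnion, SetCoe.exists, exists_and_right, Subtype.coe_mk]
    exact ⟨y, ⟨y.2, by simpa only [Subtype.coe_eta]⟩, ball_subset_closedBall h'⟩
  have S : ∑ _i : Fin N, μ s / N ≤ ∑ i, μ (s ∩ v i) :=
    calc
      ∑ _i : Fin N, μ s / N = μ s := by
        simp only [Finset.card_fin, Finset.sum_const, nsmul_eq_mul]
        rw [ENNReal.mul_div_cancel]
        · simp only [Npos, Ne, Nat.cast_eq_zero, not_false_iff]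
        · exact ENNReal.natCast_ne_top _
      _ ≤ ∑ i, μ (s ∩ v i) := by
        conv_lhs => rw [A]
        apply measure_iUnion_fintype_le
  obtain ⟨i, -, hi⟩ : ∃ (i : Fin N), i ∈ Finset.univ ∧ μ s / N ≤ μ (s ∩ v i) := by
    apply ENNReal.exists_le_of_sum_le _ S
    exact ⟨⟨0, bot_lt_iff_ne_bot.2 Npos⟩, Finset.mem_univ _⟩
  replace hi : μ s / (N + 1) < μ (s ∩ v i) := by
    grw [← hi, ← _root_.zero_lt_one, add_zero] <;> finiteness
  have B : μ (o ∩ v i) = ∑' x : u i, μ (o ∩ closedBall x (r x)) := by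
    have : o ∩ v i = ⋃ (x : s) (_ : x ∈ u i), o ∩ closedBall x (r x) := by
      simp only [v, inter_iUnion]
    rw [this, measure_biUnion (u_count i)]
    · exact (hu i).mono fun k => inter_subset_right
    · exact fun b _ => omeas.inter measurableSet_closedBall
  obtain ⟨w, hw⟩ :
    ∃ w : Finset (u i), μ s / (N + 1) <
      ∑ x ∈ w, μ (o ∩ closedBall (x : α) (r (x : α))) := by
    have C : HasSum (fun x : u i => μ (o ∩ closedBall x (r x))) (μ (o ∩ v i)) := by
      rw [B]; exact ENNReal.summable.hasSum
    have : μ s / (N + 1) < μ (o ∩ v i) := hi.trans_le (measure_mono (inter_subset_inter_left _ so))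
    exact ((tendsto_order.1 C).1 _ this).exists
  refine ⟨Finset.image (fun x : u i => x) w, ?_, ?_, ?_⟩
  · simp only [image_subset_iff, Finset.coe_image]
    intro y _
    simp only [Subtype.coe_prop, mem_preimage]
  · suffices H : μ (o \ ⋃ x ∈ w, closedBall (↑x) (r ↑x)) ≤ N / (N + 1) * μ s by
      rw [Finset.set_biUnion_finset_image]
      exact le_trans (measure_mono (diff_subset_diff so (Subset.refl _))) H
    rw [← diff_inter_self_eq_diff,
      measure_diff_le_iff_le_add _ inter_subset_right (measure_lt_top μ _).ne]
    swap
    · exact .inter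
        (w.nullMeasurableSet_biUnion fun _ _ ↦ measurableSet_closedBall.nullMeasurableSet)
        omeas.nullMeasurableSet
    calc
      μ o = 1 / (N + 1) * μ s + N / (N + 1) * μ s := by
        rw [μo, ← add_mul, ENNReal.div_add_div_same, add_comm, ENNReal.div_self, one_mul] <;> simp
      _ ≤ μ ((⋃ x ∈ w, closedBall (↑x) (r ↑x)) ∩ o) + N / (N + 1) * μ s := by
        gcongr
        rw [one_div, mul_comm, ← div_eq_mul_inv]
        apply hw.le.trans (le_of_eq _)
        rw [← Finset.set_biUnion_coe, inter_comm _ o, inter_iUnion₂, Finset.set_biUnion_coe,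
          measure_biUnion_finset]
        · have : (w : Set (u i)).PairwiseDisjoint
              fun b : u i => closedBall (b : α) (r (b : α)) := by
            intro k _ l _ hkl; exact hu i k.2 l.2 (Subtype.val_injective.ne hkl)
          exact this.mono fun k => inter_subset_right
        · intro b _
          apply omeas.inter measurableSet_closedBall
  · intro k hk l hl hkl
    obtain ⟨k', _, rfl⟩ : ∃ k' : u i, k' ∈ w ∧ ↑k' = k := by
      simpa only [mem_image, Finset.mem_coe, Finset.coe_image] using hk
    obtain ⟨l', _, rfl⟩ : ∃ l' : u i, l' ∈ w ∧ ↑l' = l := by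
      simpa only [mem_image, Finset.mem_coe, Finset.coe_image] using hl
    have k'nel' : (k' : s) ≠ l' := by intro h; rw [h] at hkl; exact hkl rfl
    exact hu i k'.2 l'.2 k'nel'

lemma lint_rpow_mul {γ : ℝ} (hγ : 0 < γ) {b : ℝ} (hb : 0 ≤ b) :
    ∫⁻ t in Ioo (0:ℝ) b, ENNReal.ofReal (γ * t ^ (γ-1)) ∂volume = ENNReal.ofReal (b ^ γ) := by
  have hint : IntervalIntegrable (fun t : ℝ => γ * t ^ (γ-1)) volume 0 b :=
    (intervalIntegral.intervalIntegrable_rpow' (by linarith)).const_mul γ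
  have hreal : ∫ t in (0:ℝ)..b, γ * t ^ (γ-1) = b ^ γ := by
    rw [intervalIntegral.integral_const_mul, integral_rpow (Or.inl (by linarith))]
    rw [sub_add_cancel, Real.zero_rpow (by linarith)]
    field_simp
    simp
  have hIoc : ∫ t in Ioc (0:ℝ) b, γ * t ^ (γ-1) = b ^ γ := by
    rw [← intervalIntegral.integral_of_le hb, hreal]
  rw [setLIntegral_congr Ioo_ae_eq_Ioc]
  rw [← ofReal_integral_eq_lintegral_ofReal]
  · rw [hIoc]
  · exact (intervalIntegrable_iff_integrableOn_Ioc_of_le hb).1 hint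
  · exact (ae_restrict_iff' measurableSet_Ioc).2 (Filter.Eventually.of_forall fun t ht =>
      mul_nonneg hγ.le (Real.rpow_nonneg ht.1.le _))

lemma lint_rpow_Ioi_top {γ : ℝ} (hγ : 1 < γ) :
    ∫⁻ t in Ioi (0:ℝ), ENNReal.ofReal (γ * t ^ (γ-1)) ∂volume = ∞ := by
  apply ENNReal.eq_top_of_forall_nnreal_le
  intro r
  have h1 : (1:ℝ) ≤ max 1 (r:ℝ) := le_max_left _ _
  calc (r : ℝ≥0∞) ≤ ENNReal.ofReal ((max 1 (r:ℝ)) ^ γ) := by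
        rw [← ENNReal.ofReal_coe_nnreal]
        apply ENNReal.ofReal_le_ofReal
        calc (r:ℝ) ≤ max 1 (r:ℝ) := le_max_right _ _
        _ = (max 1 (r:ℝ)) ^ (1:ℝ) := (Real.rpow_one _).symm
        _ ≤ (max 1 (r:ℝ)) ^ γ := Real.rpow_le_rpow_of_exponent_le h1 hγ.le
    _ = ∫⁻ t in Ioo (0:ℝ) (max 1 (r:ℝ)), ENNReal.ofReal (γ * t ^ (γ-1)) ∂volume :=
        (lint_rpow_mul (by linarith) (by linarith)).symm
    _ ≤ _ := lintegral_mono_set Ioo_subset_Ioi_self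

lemma layercake_ennreal {X : Type*} [MeasurableSpace X] (m : Measure X) [SigmaFinite m]
    {F : X → ℝ≥0∞} (hF : Measurable F) {γ : ℝ} (hγ : 1 < γ) :
    ∫⁻ x, F x ^ γ ∂m
      = ∫⁻ t in Ioi (0:ℝ), m {x | ENNReal.ofReal t < F x} * ENNReal.ofReal (γ * t ^ (γ-1)) := by
  have hγ0 : (0:ℝ) < γ := by linarith
  set Φ : X → ℝ → ℝ≥0∞ := fun x t =>
    Set.indicator {p : X × ℝ | ENNReal.ofReal p.2 < F p.1}
      (fun p => ENNReal.ofReal (γ * p.2 ^ (γ-1))) (x, t) with hΦ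
  have hS : MeasurableSet {p : X × ℝ | ENNReal.ofReal p.2 < F p.1} :=
    measurableSet_lt (ENNReal.measurable_ofReal.comp measurable_snd)
      (hF.comp measurable_fst)
  have hmeas : Measurable fun p : X × ℝ => Φ p.1 p.2 := by
    apply Measurable.indicator _ hS
    exact (ENNReal.measurable_ofReal.comp
      (measurable_const.mul (measurable_snd.pow_const (γ-1))))
  have step1 : ∀ x, ∫⁻ t in Ioi (0:ℝ), Φ x t = F x ^ γ := by
    intro x
    have hind : ∀ t : ℝ, Φ x t
        = Set.indicator {t : ℝ | ENNReal.ofReal t < F x}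
            (fun t => ENNReal.ofReal (γ * t ^ (γ-1))) t := by
      intro t
      simp only [hΦ, Set.indicator_apply, mem_setOf_eq]
    simp_rw [hind]
    have hSm : MeasurableSet {t : ℝ | ENNReal.ofReal t < F x} :=
      ENNReal.measurable_ofReal measurableSet_Iio
    rw [lintegral_indicator hSm, Measure.restrict_restrict hSm]
    rcases eq_or_ne (F x) ⊤ with hfx | hfx
    · have : {t : ℝ | ENNReal.ofReal t < F x} ∩ Ioi 0 = Ioi 0 := by
        ext t; simp [hfx, ENNReal.ofReal_lt_top]
      rw [this, lint_rpow_Ioi_top hγ, hfx, ENNReal.top_rpow_of_pos hγ0]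
    · have : {t : ℝ | ENNReal.ofReal t < F x} ∩ Ioi 0 = Ioo 0 ((F x).toReal) := by
        ext t
        simp only [mem_inter_iff, mem_setOf_eq, mem_Ioi, mem_Ioo]
        constructor
        · rintro ⟨h1, h2⟩
          exact ⟨h2, (ENNReal.ofReal_lt_iff_lt_toReal h2.le hfx).1 h1⟩
        · rintro ⟨h1, h2⟩
          exact ⟨(ENNReal.ofReal_lt_iff_lt_toReal h1.le hfx).2 h2, h1⟩
      rw [this, lint_rpow_mul hγ0 ENNReal.toReal_nonneg,
        ← ENNReal.ofReal_rpow_of_nonneg ENNReal.toReal_nonneg hγ0.le,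
        ENNReal.ofReal_toReal hfx]
  have step3 : ∀ t : ℝ, ∫⁻ x, Φ x t ∂m
      = m {x | ENNReal.ofReal t < F x} * ENNReal.ofReal (γ * t ^ (γ-1)) := by
    intro t
    have hind : ∀ x, Φ x t
        = Set.indicator {x : X | ENNReal.ofReal t < F x}
            (fun _ => ENNReal.ofReal (γ * t ^ (γ-1))) x := by
      intro x
      simp only [hΦ, Set.indicator_apply, mem_setOf_eq]
    simp_rw [hind]
    have hxm : MeasurableSet {x : X | ENNReal.ofReal t < F x} := hF measurableSet_Ioi
    rw [lintegral_indicator_const hxm, mul_comm]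
  calc ∫⁻ x, F x ^ γ ∂m = ∫⁻ x, (∫⁻ t in Ioi (0:ℝ), Φ x t) ∂m := by
        simp_rw [step1]
    _ = ∫⁻ t in Ioi (0:ℝ), ∫⁻ x, Φ x t ∂m := by
        exact lintegral_lintegral_swap hmeas.aemeasurable
    _ = _ := by simp_rw [step3]

lemma measurable_ballInt {n : ℕ} {f : (Fin n → ℝ) → ℝ} (hf : Measurable f) (q : ℝ) :
    Measurable fun x : Fin n → ℝ => ∫⁻ y in closedBall x q, ENNReal.ofReal |f y| ∂volume := by
  have h : ∀ x : Fin n → ℝ, (∫⁻ y in closedBall x q, ENNReal.ofReal |f y| ∂volume)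
      = ∫⁻ y, Set.indicator {p : (Fin n → ℝ) × (Fin n → ℝ) | dist p.2 p.1 ≤ q}
          (fun p => ENNReal.ofReal |f p.2|) (x, y) ∂volume := by
    intro x
    rw [← lintegral_indicator measurableSet_closedBall]
    refine lintegral_congr fun y => ?_
    by_cases hy : y ∈ closedBall x q
    · rw [Set.indicator_of_mem hy, Set.indicator_of_mem
        (show (x,y) ∈ {p : (Fin n → ℝ) × (Fin n → ℝ) | dist p.2 p.1 ≤ q} from mem_closedBall.1 hy)]
    · rw [Set.indicator_of_notMem hy, Set.indicator_of_notMem]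
      exact fun hc => hy hc
  simp_rw [h]
  apply Measurable.lintegral_prod_right (f := fun x y =>
    Set.indicator {p : (Fin n → ℝ) × (Fin n → ℝ) | dist p.2 p.1 ≤ q}
      (fun p => ENNReal.ofReal |f p.2|) (x, y))
  apply Measurable.indicator
  · exact ((hf.comp measurable_snd).abs).ennreal_ofReal
  · exact (isClosed_le (continuous_dist.comp (continuous_snd.prodMk continuous_fst))
      continuous_const).measurableSet

lemma sup_eq_rat_sup {n : ℕ} (f : (Fin n → ℝ) → ℝ) {s α : ℝ} (hα : 0 ≤ α) (hs : 0 < s)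
    (x : Fin n → ℝ) :
    (⨆ r ∈ Set.Ioo (0:ℝ) s, ENNReal.ofReal (r ^ α) *
        ((∫⁻ y in closedBall x r, ENNReal.ofReal |f y| ∂volume) /
          volume (closedBall x r)))
    = ⨆ (q : ℚ) (_ : (q:ℝ) ∈ Set.Ioo (0:ℝ) s), ENNReal.ofReal ((q:ℝ) ^ α) *
        ((∫⁻ y in closedBall x (q:ℝ), ENNReal.ofReal |f y| ∂volume) /
          volume (closedBall x (q:ℝ))) := by
  set I : ℝ → ℝ≥0∞ := fun r => ∫⁻ y in closedBall x r, ENNReal.ofReal |f y| ∂volume with hI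
  set G : ℝ → ℝ≥0∞ := fun r => ENNReal.ofReal (r ^ α) * (I r / volume (closedBall x r)) with hG
  have hvol : ∀ r : ℝ, 0 ≤ r → volume (closedBall x r) = ENNReal.ofReal ((2*r)^n) := by
    intro r hr
    rw [Real.volume_pi_closedBall x hr, Fintype.card_fin]
  have Imono : ∀ {r₁ r₂ : ℝ}, r₁ ≤ r₂ → I r₁ ≤ I r₂ := by
    intro r₁ r₂ h
    exact lintegral_mono_set (closedBall_subset_closedBall h)
  apply le_antisymm
  · apply iSup₂_le
    intro r hr
    obtain ⟨hr0, hrs⟩ := hr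
    rcases eq_or_ne (I r) ⊤ with hIr | hIr
    · -- pick one rational above r
      obtain ⟨q, hq1, hq2⟩ := exists_rat_btwn hrs
      have hq0 : (0:ℝ) < q := hr0.trans hq1
      have hIq : I (q:ℝ) = ⊤ := top_le_iff.1 (hIr ▸ Imono hq1.le)
      have hGq : G (q:ℝ) = ⊤ := by
        rw [hG]
        simp only
        rw [hIq, ENNReal.top_div_of_ne_top (by rw [hvol _ hq0.le]; exact ENNReal.ofReal_ne_top),
          ENNReal.mul_top (by
            simp only [ne_eq, ENNReal.ofReal_eq_zero, not_le]
            exact Real.rpow_pos_of_pos hq0 α)]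
      calc G r ≤ ⊤ := le_top
        _ = G (q:ℝ) := hGq.symm
        _ ≤ _ := le_iSup₂ (f := fun (q : ℚ) (_ : (q:ℝ) ∈ Set.Ioo (0:ℝ) s) => G (q:ℝ)) q ⟨hq0, hq2⟩
    · -- approximate from above by rationals
      set a : ℝ := (I r).toReal with ha
      have hIa : I r = ENNReal.ofReal a := (ENNReal.ofReal_toReal hIr).symm
      have hQ : ∀ k : ℕ, ∃ q : ℚ, r < (q:ℝ) ∧ (q:ℝ) < min s (r + 1/(k+1)) := by
        intro k
        exact_mod_cast exists_rat_btwn (lt_min hrs (lt_add_of_pos_right r (by positivity)))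
      choose q hq1 hq2 using hQ
      have hq0 : ∀ k, (0:ℝ) < q k := fun k => hr0.trans (hq1 k)
      have hqs : ∀ k, ((q k : ℝ)) < s := fun k => (hq2 k).trans_le (min_le_left _ _)
      have hqlim : Filter.Tendsto (fun k : ℕ => ((q k : ℝ))) Filter.atTop (nhds r) := by
        refine tendsto_of_tendsto_of_tendsto_of_le_of_le (g := fun _ : ℕ => r)
          (h := fun k : ℕ => r + 1/(k+1)) tendsto_const_nhds ?_ ?_ ?_
        · simpa using (tendsto_const_nhds (x := r)).add (tendsto_one_div_add_atTop_nhds_zero_nat (𝕜 := ℝ))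
        · exact fun k => (hq1 k).le
        · exact fun k => ((hq2 k).trans_le (min_le_right _ _)).le
      set W : ℕ → ℝ≥0∞ := fun k => ENNReal.ofReal (r ^ α * (a / (2*(q k : ℝ))^n)) with hW
      have hWle : ∀ k, W k ≤ G (q k : ℝ) := by
        intro k
        have h1 : ENNReal.ofReal (r ^ α) * (I r / volume (closedBall x (q k : ℝ))) ≤ G (q k) := by
          rw [hG]
          simp only
          gcongr
          · exact (hq1 k).le
          · exact Imono (hq1 k).le
        refine le_trans (le_of_eq ?_) h1
        show ENNReal.ofReal (r ^ α * (a / (2*(q k : ℝ))^n)) = _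
        rw [hvol _ (hq0 k).le, hIa, ENNReal.ofReal_mul (Real.rpow_nonneg hr0.le α),
          ENNReal.ofReal_div_of_pos (pow_pos (by linarith [hq0 k]) n)]
      have hWtend : Filter.Tendsto W Filter.atTop (nhds (G r)) := by
        have hGr : G r = ENNReal.ofReal (r ^ α * (a / (2*r)^n)) := by
          show ENNReal.ofReal (r ^ α) * (I r / volume (closedBall x r)) = _
          rw [hvol _ hr0.le, hIa, ENNReal.ofReal_mul (Real.rpow_nonneg hr0.le α),
            ENNReal.ofReal_div_of_pos (by positivity)]
        rw [hGr]
        apply ENNReal.tendsto_ofReal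
        apply Filter.Tendsto.const_mul
        apply Filter.Tendsto.div tendsto_const_nhds
        · exact ((tendsto_const_nhds.mul hqlim).pow n)
        · positivity
      apply le_of_tendsto' hWtend
      intro k
      exact le_trans (hWle k)
        (le_iSup₂ (f := fun (q : ℚ) (_ : (q:ℝ) ∈ Set.Ioo (0:ℝ) s) => G (q:ℝ)) (q k)
          ⟨hq0 k, hqs k⟩)
  · apply iSup₂_le
    intro q hq
    exact le_iSup₂ (f := fun (r : ℝ) (_ : r ∈ Set.Ioo (0:ℝ) s) => G r) (q:ℝ) hq

lemma weak_estimate {n : ℕ} {f : (Fin n → ℝ) → ℝ} (hf : Measurable f)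
    {s α d C : ℝ} (hs : 0 < s) (hα : 0 ≤ α) (hda : (n:ℝ) - α ≤ d) (hC : 0 < C)
    (m : Measure (Fin n → ℝ)) [IsFiniteMeasureOnCompacts m]
    (hm : ∀ (x : Fin n → ℝ) (r : ℝ), 0 < r → m (closedBall x r) ≤ ENNReal.ofReal (C * r ^ d))
    {N : ℕ} {τ : ℝ} (hτ : 1 < τ) (hN : IsEmpty (Besicovitch.SatelliteConfig (Fin n → ℝ) N τ))
    {t : ℝ} (ht : 0 < t) :
    m {x | ENNReal.ofReal t <
        ⨆ r ∈ Set.Ioo (0:ℝ) s, ENNReal.ofReal (r ^ α) *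
          ((∫⁻ y in closedBall x r, ENNReal.ofReal |f y| ∂volume) / volume (closedBall x r))}
      ≤ ((N:ℝ≥0∞)+1) * (ENNReal.ofReal ((2 * C * max 1 (s ^ (d - (n:ℝ) + α)) / 2^n) / t)
          * ∫⁻ y, (if t < 2 * s^α * |f y| then ENNReal.ofReal |f y| else 0) ∂volume) := by
  classical
  set K := s ^ α with hK
  have hK0 : 0 < K := Real.rpow_pos_of_pos hs α
  set κ := max 1 (s ^ (d - (n:ℝ) + α)) with hκ
  have hκ0 : (0:ℝ) < κ := lt_of_lt_of_le one_pos (le_max_left _ _)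
  set A := 2 * C * κ / 2^n with hA
  have hA0 : 0 < A := by positivity
  set g : (Fin n → ℝ) → ℝ≥0∞ :=
    fun y => if t < 2 * K * |f y| then ENNReal.ofReal |f y| else 0 with hg
  set E := {x : Fin n → ℝ | ENNReal.ofReal t <
      ⨆ r ∈ Set.Ioo (0:ℝ) s, ENNReal.ofReal (r ^ α) *
        ((∫⁻ y in closedBall x r, ENNReal.ofReal |f y| ∂volume) /
          volume (closedBall x r))} with hE
  have key : ∀ x ∈ E, ∃ r : ℝ, r ∈ Set.Ioo (0:ℝ) s ∧
      m (closedBall x r) ≤ ENNReal.ofReal (A / t) * ∫⁻ y in closedBall x r, g y ∂volume := by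
    intro x hx
    rw [hE, mem_setOf_eq, lt_iSup_iff] at hx
    obtain ⟨r, hr⟩ := hx
    rw [lt_iSup_iff] at hr
    obtain ⟨⟨hr0, hrs⟩, hr⟩ := hr
    refine ⟨r, ⟨hr0, hrs⟩, ?_⟩
    set v := volume (closedBall x r) with hv
    have hvr : v = ENNReal.ofReal ((2*r)^n) := by
      rw [hv, Real.volume_pi_closedBall x hr0.le, Fintype.card_fin]
    have h2rn : (0:ℝ) < (2*r)^n := by positivity
    have hv0 : v ≠ 0 := by
      rw [hvr]; simp only [ne_eq, ENNReal.ofReal_eq_zero, not_le]; exact h2rn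
    have hvtop : v ≠ ⊤ := by rw [hvr]; exact ENNReal.ofReal_ne_top
    set J := ∫⁻ y in closedBall x r, g y ∂volume with hJ
    rcases eq_or_ne J ⊤ with hJt | hJt
    · rw [hJt, ENNReal.mul_top (ne_of_gt (ENNReal.ofReal_pos.2 (by positivity)))]
      exact le_top
    · have hsplit : (∫⁻ y in closedBall x r, ENNReal.ofReal |f y| ∂volume)
          ≤ J + ENNReal.ofReal (t/(2*K)) * v := by
        calc (∫⁻ y in closedBall x r, ENNReal.ofReal |f y| ∂volume)
            ≤ ∫⁻ y in closedBall x r, (g y + ENNReal.ofReal (t/(2*K))) ∂volume := by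
              apply lintegral_mono
              intro y
              by_cases hy : t < 2 * K * |f y|
              · rw [hg]; simp only [if_pos hy]; exact le_self_add
              · push_neg at hy
                have hfy : |f y| ≤ t / (2*K) := by
                  rw [le_div_iff₀ (by positivity), mul_comm]; exact hy
                rw [hg]; simp only [if_neg (not_lt.2 hy), zero_add]
                exact ENNReal.ofReal_le_ofReal hfy
          _ = J + ENNReal.ofReal (t/(2*K)) * v := by
              rw [lintegral_add_right _ measurable_const, setLIntegral_const]
      have hrαK : r ^ α ≤ K := Real.rpow_le_rpow hr0.le hrs.le hα
      have hlt2 : ENNReal.ofReal (t/2) + ENNReal.ofReal (t/2)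
          < ENNReal.ofReal (r^α) * (J/v) + ENNReal.ofReal (t/2) := by
        calc ENNReal.ofReal (t/2) + ENNReal.ofReal (t/2) = ENNReal.ofReal t := by
              rw [← ENNReal.ofReal_add (by positivity) (by positivity)]; norm_num
          _ < ENNReal.ofReal (r^α) *
                ((∫⁻ y in closedBall x r, ENNReal.ofReal |f y| ∂volume) / v) := hr
          _ ≤ ENNReal.ofReal (r^α) * ((J + ENNReal.ofReal (t/(2*K)) * v) / v) := by
              gcongr
          _ = ENNReal.ofReal (r^α) * (J/v)
                + ENNReal.ofReal (r^α) * ENNReal.ofReal (t/(2*K)) := by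
              rw [ENNReal.add_div, mul_div_assoc, ENNReal.div_self hv0 hvtop, mul_one, mul_add]
          _ ≤ ENNReal.ofReal (r^α) * (J/v) + ENNReal.ofReal (t/2) := by
              gcongr
              rw [← ENNReal.ofReal_mul (Real.rpow_nonneg hr0.le α)]
              apply ENNReal.ofReal_le_ofReal
              calc r ^ α * (t/(2*K)) ≤ K * (t/(2*K)) := by
                    apply mul_le_mul_of_nonneg_right hrαK (by positivity)
                _ = t/2 := by field_simp
      have hlt3 : ENNReal.ofReal (t/2) < ENNReal.ofReal (r^α) * (J/v) :=
        (ENNReal.add_lt_add_iff_right ENNReal.ofReal_ne_top).1 hlt2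
      set j := J.toReal with hj
      have hJa : J = ENNReal.ofReal j := (ENNReal.ofReal_toReal hJt).symm
      have hj0 : 0 ≤ j := ENNReal.toReal_nonneg
      have hjlt : t/2 < r^α * (j / (2*r)^n) := by
        have heq : ENNReal.ofReal (r^α) * (J/v) = ENNReal.ofReal (r^α * (j/(2*r)^n)) := by
          rw [hJa, hvr, ← ENNReal.ofReal_div_of_pos h2rn,
            ← ENNReal.ofReal_mul (Real.rpow_nonneg hr0.le α)]
        rw [heq] at hlt3
        exact (ENNReal.ofReal_lt_ofReal_iff_of_nonneg (by positivity)).1 hlt3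
      have hrα : (0:ℝ) < r^α := Real.rpow_pos_of_pos hr0 α
      have htne : t ≠ 0 := ht.ne'
      have hrαne : r^α ≠ 0 := hrα.ne'
      have h2n : (2:ℝ)^n ≠ 0 := by positivity
      have hkey : C * r ^ d ≤ A / t * j := by
        have h1' : t/2 * (2*r)^n < r^α * j := by
          have h := mul_lt_mul_of_pos_right hjlt h2rn
          have heq : r^α * (j/(2*r)^n) * (2*r)^n = r^α * j := by field_simp
          rw [heq] at h
          exact h
        have h1 : t/2 * (2*r)^n / r^α ≤ j := by
          rw [div_le_iff₀ hrα]
          nlinarith [h1']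
        have he0 : 0 ≤ d - (n:ℝ) + α := by linarith
        have hrd : r ^ d ≤ κ * r ^ ((n:ℝ) - α) := by
          have hspl : r ^ d = r ^ ((n:ℝ) - α) * r ^ (d - (n:ℝ) + α) := by
            rw [← Real.rpow_add hr0]
            ring_nf
          rw [hspl, mul_comm]
          apply mul_le_mul_of_nonneg_right _ (Real.rpow_nonneg hr0.le _)
          rcases le_or_gt r 1 with h1r | h1r
          · exact le_trans (Real.rpow_le_one hr0.le h1r he0) (le_max_left _ _)
          · exact le_trans (Real.rpow_le_rpow hr0.le hrs.le he0) (le_max_right _ _)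
        have hrna : r ^ ((n:ℝ) - α) = r^(n:ℕ) / r^α := by
          rw [Real.rpow_sub hr0, Real.rpow_natCast]
        have hL : C * κ * r^((n:ℝ)-α) = A/t * (t/2 * (2*r)^n / r^α) := by
          rw [hrna, hA, mul_pow]
          field_simp
        calc C * r^d ≤ C * (κ * r^((n:ℝ)-α)) := mul_le_mul_of_nonneg_left hrd hC.le
          _ = C * κ * r^((n:ℝ)-α) := by ring
          _ = A/t * (t/2*(2*r)^n/r^α) := hL
          _ ≤ A/t * j := mul_le_mul_of_nonneg_left h1 (by positivity)
      calc m (closedBall x r) ≤ ENNReal.ofReal (C * r ^ d) := hm x r hr0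
        _ ≤ ENNReal.ofReal (A / t * j) := ENNReal.ofReal_le_ofReal hkey
        _ = ENNReal.ofReal (A/t) * J := by rw [ENNReal.ofReal_mul (by positivity), hJa]
  have main : ∀ R : ℕ, m (E ∩ closedBall 0 (R:ℝ))
      ≤ ((N:ℝ≥0∞)+1) * (ENNReal.ofReal (A/t) * ∫⁻ y, g y ∂volume) := by
    intro R
    set μR := m.restrict (closedBall (0 : Fin n → ℝ) ((R:ℝ) + s)) with hμR
    haveI : IsFiniteMeasure μR := ⟨by
      rw [hμR, Measure.restrict_apply_univ]
      exact (isCompact_closedBall _ _).measure_lt_top⟩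
    have hex : ∀ x : Fin n → ℝ, ∃ r : ℝ, (0 < r ∧ r ≤ s) ∧ (x ∈ E →
        m (closedBall x r) ≤ ENNReal.ofReal (A / t) *
          ∫⁻ y in closedBall x r, g y ∂volume) := by
      intro x
      by_cases hx : x ∈ E
      · obtain ⟨r, hr1, hr2⟩ := key x hx
        exact ⟨r, ⟨hr1.1, hr1.2.le⟩, fun _ => hr2⟩
      · exact ⟨s/2, ⟨by positivity, by linarith⟩, fun h => absurd h hx⟩
    choose ρ hρ1 hρ2 using hex
    obtain ⟨w, hw1, hw2, hw3⟩ := exist_finset_disjoint_balls_large_measure' μR hτ hN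
      (E ∩ closedBall 0 (R:ℝ)) ρ hs (fun x _ => (hρ1 x).1) (fun x _ => (hρ1 x).2)
    set S := E ∩ closedBall (0 : Fin n → ℝ) (R:ℝ) with hS
    set c := ENNReal.ofReal (A/t) * ∫⁻ y, g y ∂volume with hc
    have hsum : ∑ x ∈ w, m (closedBall x (ρ x)) ≤ c := by
      calc ∑ x ∈ w, m (closedBall x (ρ x))
          ≤ ∑ x ∈ w, ENNReal.ofReal (A/t) * ∫⁻ y in closedBall x (ρ x), g y ∂volume := by
            apply Finset.sum_le_sum
            intro x hx
            exact hρ2 x (hw1 hx).1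
        _ = ENNReal.ofReal (A/t) * ∑ x ∈ w, ∫⁻ y in closedBall x (ρ x), g y ∂volume :=
            (Finset.mul_sum _ _ _).symm
        _ ≤ c := by
            rw [hc]
            gcongr
            rw [← lintegral_biUnion_finset hw3 (fun _ _ => measurableSet_closedBall)]
            exact setLIntegral_le_lintegral _ _
    have hSb : μR S ≤ (N : ℝ≥0∞)/((N:ℝ≥0∞)+1) * μR S + c := by
      calc μR S ≤ μR (S \ ⋃ x ∈ w, closedBall x (ρ x)) + μR (⋃ x ∈ w, closedBall x (ρ x)) := by
            refine le_trans (measure_mono ?_) (measure_union_le _ _)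
            exact subset_diff_union _ _
        _ ≤ (N : ℝ≥0∞)/((N:ℝ≥0∞)+1) * μR S + c := by
            refine add_le_add hw2 ?_
            calc μR (⋃ x ∈ w, closedBall x (ρ x)) ≤ ∑ x ∈ w, μR (closedBall x (ρ x)) :=
                  measure_biUnion_finset_le _ _
                _ ≤ ∑ x ∈ w, m (closedBall x (ρ x)) := by
                    apply Finset.sum_le_sum
                    intro x _
                    exact Measure.restrict_le_self _
                _ ≤ c := hsum
    have hNe1 : ((N:ℝ≥0∞)+1) ≠ 0 := by simp
    have hNe2 : ((N:ℝ≥0∞)+1) ≠ ⊤ := by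
      simp [ENNReal.add_ne_top]
    have halg : μR S ≤ ((N:ℝ≥0∞)+1) * c := by
      have ha : μR S ≠ ⊤ := (measure_lt_top μR S).ne
      have hid : (N:ℝ≥0∞)/((N:ℝ≥0∞)+1) * μR S + 1/((N:ℝ≥0∞)+1) * μR S = μR S := by
        rw [← add_mul, ENNReal.div_add_div_same, ENNReal.div_self hNe1 hNe2, one_mul]
      have h2 : (N:ℝ≥0∞)/((N:ℝ≥0∞)+1) * μR S + 1/((N:ℝ≥0∞)+1) * μR S
          ≤ (N:ℝ≥0∞)/((N:ℝ≥0∞)+1) * μR S + c := by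
        rw [hid]; exact hSb
      have hfin : (N:ℝ≥0∞)/((N:ℝ≥0∞)+1) * μR S ≠ ⊤ :=
        ENNReal.mul_ne_top (ENNReal.div_lt_top (ENNReal.natCast_ne_top N) hNe1).ne ha
      have h3 : 1/((N:ℝ≥0∞)+1) * μR S ≤ c := (ENNReal.add_le_add_iff_left hfin).1 h2
      rw [one_div, ← ENNReal.div_eq_inv_mul] at h3
      rw [mul_comm]
      exact (ENNReal.div_le_iff_le_mul (Or.inl hNe1) (Or.inl hNe2)).1 h3
    have hmS : m S = μR S := by
      rw [hμR, Measure.restrict_apply' measurableSet_closedBall, inter_eq_left.2 ?_]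
      refine (inter_subset_right).trans (closedBall_subset_closedBall (by linarith))
    rw [hmS]
    exact halg
  have hEsub : E ⊆ ⋃ R : ℕ, (E ∩ closedBall 0 (R:ℝ)) := by
    intro x hx
    refine mem_iUnion.2 ⟨⌈‖x‖⌉₊, hx, ?_⟩
    rw [mem_closedBall, dist_zero_right]
    exact Nat.le_ceil _
  calc m E ≤ m (⋃ R : ℕ, (E ∩ closedBall 0 (R:ℝ))) := measure_mono hEsub
    _ = ⨆ R : ℕ, m (E ∩ closedBall 0 (R:ℝ)) := by
        apply Directed.measure_iUnion
        apply Monotone.directed_le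
        intro a b hab
        exact inter_subset_inter_right _ (closedBall_subset_closedBall (by exact_mod_cast hab))
    _ ≤ ((N:ℝ≥0∞)+1) * (ENNReal.ofReal (A/t) * ∫⁻ y, g y ∂volume) := iSup_le main



/-- Let `d ∈ [0,n]`, `γ ∈ (1,∞)`, `α ≥ 0` with `d ≥ n − α`, and
`0 < s < ∞`.  Then there is a constant `C'` (depending only on `γ, n, d, α, C`) such
that for every Radon measure `m` on `ℝⁿ` satisfying `m(B(x,r)) ≤ C r^d` for all `x, r`,
the fractional maximal operator
`M^{<s}[f,α](x) = sup_{r ∈ (0,s)} r^α ⨍_{B(x,r)} |f| dL_n`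
is bounded from `L_γ(ℝⁿ, L_n)` into `L_γ(ℝⁿ, m)` with norm at most `C'`. -/
theorem statement6 (n : ℕ) (d γ α : ℝ) (hd0 : 0 ≤ d) (hdn : d ≤ n) (hγ : 1 < γ)
    (hα : 0 ≤ α) (hda : (n : ℝ) - α ≤ d) (s : ℝ) (hs : 0 < s)
    (C : ℝ) (hC : 0 < C) :
    ∃ C' : ℝ, 0 < C' ∧
      ∀ m : Measure (Fin n → ℝ), m.Regular →
        (∀ (x : Fin n → ℝ) (r : ℝ), 0 < r → m (closedBall x r) ≤ ENNReal.ofReal (C * r ^ d)) →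
        ∀ f : (Fin n → ℝ) → ℝ, Measurable f →
          (∫⁻ x, (⨆ r ∈ Set.Ioo (0:ℝ) s, ENNReal.ofReal (r ^ α) *
                ((∫⁻ y in closedBall x r, ENNReal.ofReal |f y| ∂volume) /
                  volume (closedBall x r))) ^ γ ∂m) ^ (1/γ)
            ≤ ENNReal.ofReal C' * (∫⁻ x, ENNReal.ofReal |f x| ^ γ ∂volume) ^ (1/γ) := by
  classical
  obtain ⟨N, τ, hτ, hN⟩ := HasBesicovitchCovering.no_satelliteConfig (α := Fin n → ℝ)
  set K := s ^ α with hK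
  have hK0 : 0 < K := Real.rpow_pos_of_pos hs α
  set κ := max 1 (s ^ (d - (n:ℝ) + α)) with hκ
  have hκ0 : (0:ℝ) < κ := lt_of_lt_of_le one_pos (le_max_left _ _)
  set A := 2 * C * κ / 2^n with hA
  have hA0 : 0 < A := by positivity
  set D := ((N:ℝ)+1) * A * γ with hD
  have hγ0 : (0:ℝ) < γ := by linarith
  have hγ1 : (0:ℝ) < γ - 1 := by linarith
  have hD0 : 0 < D := by positivity
  set B1 := D/(γ-1) * (2*K)^(γ-1) with hB1
  have hB10 : 0 < B1 := by positivity
  refine ⟨B1 ^ (1/γ), by positivity, ?_⟩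
  intro m hreg hm f hf
  haveI := hreg
  haveI : SigmaFinite m := inferInstance
  set F : (Fin n → ℝ) → ℝ≥0∞ := fun x => ⨆ r ∈ Set.Ioo (0:ℝ) s, ENNReal.ofReal (r ^ α) *
      ((∫⁻ y in closedBall x r, ENNReal.ofReal |f y| ∂volume) /
        volume (closedBall x r)) with hF
  have hFm : Measurable F := by
    have hFeq : F = fun x => ⨆ (q : ℚ) (_ : (q:ℝ) ∈ Set.Ioo (0:ℝ) s),
        ENNReal.ofReal ((q:ℝ) ^ α) *
          ((∫⁻ y in closedBall x (q:ℝ), ENNReal.ofReal |f y| ∂volume) /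
            volume (closedBall x (q:ℝ))) := funext fun x => sup_eq_rat_sup f hα hs x
    rw [hFeq]
    apply Measurable.iSup
    intro q
    by_cases hq : (q:ℝ) ∈ Set.Ioo (0:ℝ) s
    · simp only [hq, iSup_pos]
      have hveq : (fun x : Fin n → ℝ => volume (closedBall x (q:ℝ)))
          = fun _ => ENNReal.ofReal ((2*(q:ℝ))^n) := by
        funext x
        rw [Real.volume_pi_closedBall x hq.1.le, Fintype.card_fin]
      exact measurable_const.mul
        ((measurable_ballInt hf (q:ℝ)).div (hveq ▸ measurable_const))
    · simp only [hq, iSup_false]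
      exact measurable_const
  set g : ℝ → (Fin n → ℝ) → ℝ≥0∞ :=
    fun t y => if t < 2 * s^α * |f y| then ENNReal.ofReal |f y| else 0 with hg
  have hgm : Measurable (fun p : ℝ × (Fin n → ℝ) => g p.1 p.2) := by
    apply Measurable.ite
    · exact measurableSet_lt measurable_fst
        (measurable_const.mul ((hf.comp measurable_snd).abs))
    · exact ((hf.comp measurable_snd).abs).ennreal_ofReal
    · exact measurable_const
  set ψ : ℝ → (Fin n → ℝ) → ℝ≥0∞ :=
    fun t x => ENNReal.ofReal (D * t^(γ-2)) * g t x with hψ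
  have hψm : Measurable (fun p : ℝ × (Fin n → ℝ) => ψ p.1 p.2) := by
    apply Measurable.mul _ hgm
    exact (measurable_const.mul (measurable_fst.pow_const (γ-2))).ennreal_ofReal
  -- main chain
  have main : ∫⁻ x, F x ^ γ ∂m ≤ ENNReal.ofReal B1 * ∫⁻ x, ENNReal.ofReal |f x| ^ γ ∂volume := by
    have hcast : ((N:ℝ≥0∞)+1) = ENNReal.ofReal ((N:ℝ)+1) := by
      rw [ENNReal.ofReal_add (by positivity) zero_le_one, ENNReal.ofReal_natCast,
        ENNReal.ofReal_one]
    calc ∫⁻ x, F x ^ γ ∂m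
        = ∫⁻ t in Ioi (0:ℝ), m {x | ENNReal.ofReal t < F x} * ENNReal.ofReal (γ * t ^ (γ-1)) :=
          layercake_ennreal m hFm hγ
      _ ≤ ∫⁻ t in Ioi (0:ℝ), ∫⁻ x, ψ t x ∂volume := by
          apply lintegral_mono_ae
          refine (ae_restrict_iff' measurableSet_Ioi).2
            (Filter.Eventually.of_forall fun t ht => ?_)
          have ht0 : (0:ℝ) < t := ht
          have hw := weak_estimate hf hs hα hda hC m hm hτ hN ht0
          have hconst : (((N:ℝ≥0∞)+1) * ENNReal.ofReal (A/t)) * ENNReal.ofReal (γ * t^(γ-1))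
              = ENNReal.ofReal (D * t^(γ-2)) := by
            rw [hcast, ← ENNReal.ofReal_mul (by positivity), ← ENNReal.ofReal_mul (by positivity)]
            congr 1
            have hexp : t ^ (γ-2) = t^(γ-1) / t := by
              have h2 : γ - 2 = (γ-1) - 1 := by ring
              rw [h2, Real.rpow_sub ht0, Real.rpow_one]
            rw [hD, hexp]
            field_simp
          calc m {x | ENNReal.ofReal t < F x} * ENNReal.ofReal (γ * t ^ (γ-1))
              ≤ (((N:ℝ≥0∞)+1) * (ENNReal.ofReal (A/t) * ∫⁻ y, g t y ∂volume))
                  * ENNReal.ofReal (γ * t^(γ-1)) := by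
                gcongr
            _ = ENNReal.ofReal (D * t^(γ-2)) * ∫⁻ y, g t y ∂volume := by
                rw [← hconst]
                ring
            _ = ∫⁻ x, ψ t x ∂volume :=
                (lintegral_const_mul' _ _ ENNReal.ofReal_ne_top).symm
      _ = ∫⁻ x, (∫⁻ t in Ioi (0:ℝ), ψ t x) ∂volume :=
          lintegral_lintegral_swap hψm.aemeasurable
      _ = ∫⁻ x, ENNReal.ofReal B1 * ENNReal.ofReal |f x| ^ γ ∂volume := by
          apply lintegral_congr
          intro x
          have habs : (0:ℝ) ≤ |f x| := abs_nonneg _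
          set b := 2 * s^α * |f x| with hb
          have hb0 : 0 ≤ b := by positivity
          have hgi : ∀ t : ℝ, ψ t x = Set.indicator {t : ℝ | t < b}
              (fun t => ENNReal.ofReal (D * t^(γ-2)) * ENNReal.ofReal |f x|) t := by
            intro t
            show ENNReal.ofReal (D * t^(γ-2)) *
              (if t < 2 * s^α * |f x| then ENNReal.ofReal |f x| else 0) = _
            by_cases htb : t < 2*s^α*|f x|
            · rw [if_pos htb, Set.indicator_of_mem (show t ∈ {t : ℝ | t < b} from htb)]
            · rw [if_neg htb, Set.indicator_of_notMem
                (show t ∉ {t : ℝ | t < b} from htb), mul_zero]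
          simp_rw [hgi]
          have hSm : MeasurableSet {t : ℝ | t < b} := measurableSet_Iio
          rw [lintegral_indicator hSm, Measure.restrict_restrict hSm]
          have hset : {t : ℝ | t < b} ∩ Ioi 0 = Ioo 0 b := by
            ext u
            constructor
            · rintro ⟨h1, h2⟩; exact ⟨h2, h1⟩
            · rintro ⟨h1, h2⟩; exact ⟨h2, h1⟩
          rw [hset, lintegral_mul_const' _ _ ENNReal.ofReal_ne_top]
          have hDsplit : ∀ u : ℝ, ENNReal.ofReal (D * u^(γ-2))
              = ENNReal.ofReal (D/(γ-1)) * ENNReal.ofReal ((γ-1) * u^((γ-1)-1)) := by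
            intro u
            rw [← ENNReal.ofReal_mul (by positivity)]
            congr 1
            have h2 : γ - 2 = (γ-1) - 1 := by ring
            rw [h2]
            field_simp
          simp_rw [hDsplit]
          rw [lintegral_const_mul' _ _ ENNReal.ofReal_ne_top, lint_rpow_mul hγ1 hb0]
          have hre : D/(γ-1) * b^(γ-1) * |f x| = B1 * |f x|^γ := by
            have hfpow : |f x| ^ (γ-1) * |f x| ^ (1:ℝ) = |f x| ^ γ := by
              rw [← Real.rpow_add' habs (by linarith)]
              norm_num
            rw [hb, Real.mul_rpow (by positivity) habs, hB1]
            rw [Real.rpow_one] at hfpow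
            nlinarith [hfpow]
          rw [ENNReal.ofReal_rpow_of_nonneg habs hγ0.le,
            ← ENNReal.ofReal_mul hB10.le, ← hre,
            ← ENNReal.ofReal_mul (by positivity : (0:ℝ) ≤ D/(γ-1)),
            ← ENNReal.ofReal_mul (by positivity : (0:ℝ) ≤ D/(γ-1) * b^(γ-1))]
      _ = ENNReal.ofReal B1 * ∫⁻ x, ENNReal.ofReal |f x| ^ γ ∂volume :=
          lintegral_const_mul' _ _ ENNReal.ofReal_ne_top
  calc (∫⁻ x, F x ^ γ ∂m) ^ (1/γ)
      ≤ (ENNReal.ofReal B1 * ∫⁻ x, ENNReal.ofReal |f x| ^ γ ∂volume) ^ (1/γ) :=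
        ENNReal.rpow_le_rpow main (by positivity)
    _ = ENNReal.ofReal (B1 ^ (1/γ)) * (∫⁻ x, ENNReal.ofReal |f x| ^ γ ∂volume) ^ (1/γ) := by
        rw [ENNReal.mul_rpow_of_nonneg _ _ (by positivity : (0:ℝ) ≤ 1/γ),
          ENNReal.ofReal_rpow_of_pos hB10]
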